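/- Let $K_2, \widehat\beta, K, \lambda, T > 0$ and set $g(t) = K_2(-\widehat\beta/2 + K e^{-\lambda(T-t)})$. Then there exist constants $K', \lambda' > 0$ depending only on $K_2, \widehat\beta, K, \lambda$ (not on $T$ or $t$) such that for all $t \in [0,T]$, $\int_0^t \exp\big(\int_s^t g(r)\,dr\big)\, K e^{-\lambda(T - s)}\, ds \leq K' e^{-\lambda'(T - t)}$. -/

import Mathlib

theorem stmt7 (K2 betah K lam : ℝ) (hK2 : 0 < K2) (hb : 0 < betah) (hK : 0 < K)
    (hlam : 0 < lam) :
    ∃ K' lam' : ℝ, 0 < K' ∧ 0 < lam' ∧ ∀ T : ℝ, 0 < T → ∀ t ∈ Set.Icc (0 : ℝ) T,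
      (∫ s in (0 : ℝ)..t,
          Real.exp (∫ r in s..t, K2 * (-betah / 2 + K * Real.exp (-lam * (T - r)))) *
            (K * Real.exp (-lam * (T - s))))
        ≤ K' * Real.exp (-lam' * (T - t)) := by
  set a : ℝ := K2 * betah / 2 with ha
  have ha0 : 0 < a := by positivity
  refine ⟨K * Real.exp (K2 * K / lam) / (a + lam), lam, by positivity, hlam, ?_⟩
  intro T hT t ht
  obtain ⟨ht0, htT⟩ := ht
  -- closed form of the inner integral
  have hinner : ∀ s : ℝ,
      (∫ r in s..t, K2 * (-betah / 2 + K * Real.exp (-lam * (T - r))))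
      = (K2 * (-betah / 2 * t + K / lam * Real.exp (-lam * (T - t))))
        - (K2 * (-betah / 2 * s + K / lam * Real.exp (-lam * (T - s)))) := by
    intro s
    have hd : ∀ r : ℝ, HasDerivAt
        (fun r : ℝ => K2 * (-betah / 2 * r + K / lam * Real.exp (-lam * (T - r))))
        (K2 * (-betah / 2 + K * Real.exp (-lam * (T - r)))) r := by
      intro r
      have h1 : HasDerivAt (fun x : ℝ => -lam * (T - x)) (-lam * (0 - 1)) r :=
        (((hasDerivAt_const r T).sub (hasDerivAt_id r))).const_mul (-lam)
      have h2 := (((hasDerivAt_id r).const_mul (-betah / 2)).add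
        (h1.exp.const_mul (K / lam))).const_mul K2
      refine h2.congr_deriv ?_
      field_simp
      ring
    exact intervalIntegral.integral_eq_sub_of_hasDerivAt (fun r _ => hd r)
      ((by fun_prop : Continuous fun r : ℝ =>
        K2 * (-betah / 2 + K * Real.exp (-lam * (T - r)))).intervalIntegrable s t)
  simp only [hinner]
  have he1 : Real.exp (-lam * (T - t)) ≤ 1 := Real.exp_le_one_iff.mpr (by nlinarith)
  -- pointwise bound
  have hpt : ∀ s ∈ Set.Icc (0 : ℝ) t,
      Real.exp ((K2 * (-betah / 2 * t + K / lam * Real.exp (-lam * (T - t))))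
          - (K2 * (-betah / 2 * s + K / lam * Real.exp (-lam * (T - s)))))
        * (K * Real.exp (-lam * (T - s)))
      ≤ K * Real.exp (K2 * K / lam) * Real.exp (-lam * (T - t))
          * Real.exp (-(a + lam) * (t - s)) := by
    intro s hs
    have hL : Real.exp ((K2 * (-betah / 2 * t + K / lam * Real.exp (-lam * (T - t))))
          - (K2 * (-betah / 2 * s + K / lam * Real.exp (-lam * (T - s)))))
        * (K * Real.exp (-lam * (T - s)))
        = K * Real.exp (((K2 * (-betah / 2 * t + K / lam * Real.exp (-lam * (T - t))))
          - (K2 * (-betah / 2 * s + K / lam * Real.exp (-lam * (T - s)))))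
          + (-lam * (T - s))) := by
      rw [Real.exp_add]; ring
    have hR : K * Real.exp (K2 * K / lam) * Real.exp (-lam * (T - t))
          * Real.exp (-(a + lam) * (t - s))
        = K * Real.exp (K2 * K / lam + (-lam * (T - t)) + (-(a + lam) * (t - s))) := by
      rw [Real.exp_add, Real.exp_add]; ring
    rw [hL, hR]
    have hc : (0:ℝ) < K2 * K / lam := by positivity
    have he2 : (0:ℝ) ≤ Real.exp (-lam * (T - s)) := (Real.exp_pos _).le
    have hb1 : K2 * (K / lam) * Real.exp (-lam * (T - t)) ≤ K2 * (K / lam) :=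
      mul_le_of_le_one_right (by positivity) he1
    have hb2 : 0 ≤ K2 * (K / lam) * Real.exp (-lam * (T - s)) := by positivity
    apply mul_le_mul_of_nonneg_left _ hK.le
    apply Real.exp_le_exp.mpr
    simp only [ha]
    set E1 := Real.exp (-lam * (T - t)) with hE1
    set E2 := Real.exp (-lam * (T - s)) with hE2
    have hq : K2 * (K / lam) = K2 * K / lam := by ring
    nlinarith [hb1, hb2, hq]
  have hint1 : IntervalIntegrable (fun s : ℝ =>
      Real.exp ((K2 * (-betah / 2 * t + K / lam * Real.exp (-lam * (T - t))))
          - (K2 * (-betah / 2 * s + K / lam * Real.exp (-lam * (T - s)))))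
        * (K * Real.exp (-lam * (T - s)))) MeasureTheory.volume 0 t :=
    (by fun_prop : Continuous _).intervalIntegrable 0 t
  have hint2 : IntervalIntegrable (fun s : ℝ =>
      K * Real.exp (K2 * K / lam) * Real.exp (-lam * (T - t))
        * Real.exp (-(a + lam) * (t - s))) MeasureTheory.volume 0 t :=
    (by fun_prop : Continuous _).intervalIntegrable 0 t
  have hmono := intervalIntegral.integral_mono_on ht0 hint1 hint2 hpt
  refine hmono.trans ?_
  -- compute the bound integral
  have hd2 : ∀ s : ℝ, HasDerivAt
      (fun s : ℝ => K * Real.exp (K2 * K / lam) * Real.exp (-lam * (T - t))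
        * (Real.exp (-(a + lam) * (t - s)) / (a + lam)))
      (K * Real.exp (K2 * K / lam) * Real.exp (-lam * (T - t))
        * Real.exp (-(a + lam) * (t - s))) s := by
    intro s
    have h1 : HasDerivAt (fun x : ℝ => -(a + lam) * (t - x)) (-(a + lam) * (0 - 1)) s :=
      (((hasDerivAt_const s t).sub (hasDerivAt_id s))).const_mul (-(a + lam))
    have h2 := (h1.exp.div_const (a + lam)).const_mul
      (K * Real.exp (K2 * K / lam) * Real.exp (-lam * (T - t)))
    refine h2.congr_deriv ?_
    field_simp
    ring
  rw [intervalIntegral.integral_eq_sub_of_hasDerivAt (fun s _ => hd2 s)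
      ((by fun_prop : Continuous _).intervalIntegrable 0 t)]
  have he3 : Real.exp (-(a + lam) * (t - t)) = 1 := by simp
  have he4 : (0:ℝ) < Real.exp (-(a + lam) * (t - 0)) := Real.exp_pos _
  rw [he3]
  have hnn : (0:ℝ) ≤ K * Real.exp (K2 * K / lam) * Real.exp (-lam * (T - t))
      * (Real.exp (-(a + lam) * (t - 0)) / (a + lam)) := by positivity
  have heq : K * Real.exp (K2 * K / lam) * Real.exp (-lam * (T - t)) * (1 / (a + lam))
      = K * Real.exp (K2 * K / lam) / (a + lam) * Real.exp (-lam * (T - t)) := by ring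
  linarith
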